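/- Let κ > 0 and let g: ℝ → ℝ be bounded and continuous. Then the convolution K₀ * g belongs to C²_b(ℝ) and satisfies (K₀ * g)''(ξ) - κ² (K₀ * g)(ξ) + g(ξ) = 0 for all ξ ∈ ℝ. -/

import Mathlib

open Real MeasureTheory Filter Topology
open Set

/-- The kernel K₀(ξ) = e^{-κ|ξ|}/(2κ). -/
noncomputable def K0 (κ ξ : ℝ) : ℝ := Real.exp (-κ * |ξ|) / (2 * κ)

/-- Convolution (K * g)(ξ) = ∫ K(ξ-y) g(y) dy. -/
noncomputable def conv (K g : ℝ → ℝ) (ξ : ℝ) : ℝ := ∫ y, K (ξ - y) * g y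

/-- ψ ∈ C²_b(ℝ): twice continuously differentiable with bounded derivatives up to order 2. -/
def C2b (ψ : ℝ → ℝ) : Prop :=
  ContDiff ℝ 2 ψ ∧ (∃ C, ∀ x, |ψ x| ≤ C) ∧ (∃ C, ∀ x, |deriv ψ x| ≤ C) ∧
    ∃ C, ∀ x, |deriv (deriv ψ) x| ≤ C

lemma expIntIic (κ : ℝ) (hκ : 0 < κ) (c : ℝ) :
    IntegrableOn (fun y : ℝ => Real.exp (κ * y)) (Iic c) := by
  have h : IntegrableOn (fun x : ℝ => Real.exp (-(κ * x))) (Ioi (-c)) := by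
    simpa [neg_mul] using exp_neg_integrableOn_Ioi (-c) hκ
  have A : MeasurableEmbedding (fun x : ℝ => -x) := (Homeomorph.neg ℝ).measurableEmbedding
  have h2 : IntegrableOn (fun x : ℝ => Real.exp (-(κ * x))) (Ioi (-c))
      (Measure.map (fun x : ℝ => -x) volume) := by
    rwa [Measure.map_neg_eq_self]
  have h3 := (A.integrableOn_map_iff).mp h2
  simp only [Function.comp_def, mul_neg, neg_neg] at h3
  rw [show (fun x : ℝ => -x) ⁻¹' Ioi (-c) = Iio c by ext x; simp] at h3
  exact (integrableOn_Iic_iff_integrableOn_Iio).mpr h3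

lemma expIntegralIic (κ : ℝ) (hκ : 0 < κ) (c : ℝ) :
    ∫ y in Iic c, Real.exp (κ * y) = Real.exp (κ * c) / κ := by
  have h1 : ∫ y in Iic c, Real.exp (κ * y)
      = ∫ y in Iic c, (fun x => Real.exp (-(κ * x))) (-y) := by
    congr 1; ext y; simp
  rw [h1, integral_comp_neg_Iic c (fun x => Real.exp (-(κ * x))),
    integral_comp_mul_left_Ioi (fun t => Real.exp (-t)) _ hκ]
  rw [integral_exp_neg_Ioi]
  simp [smul_eq_mul]
  ring

lemma iicDeriv {f : ℝ → ℝ} (hf : Continuous f) (hint : ∀ c, IntegrableOn f (Iic c)) (t : ℝ) :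
    HasDerivAt (fun u => ∫ y in Iic u, f y) (f t) t := by
  have key : (fun u => ∫ y in Iic u, f y)
      = fun u => (∫ y in Iic (0:ℝ), f y) + ∫ y in (0:ℝ)..u, f y := by
    funext u
    rw [← intervalIntegral.integral_Iic_sub_Iic (hint 0) (hint u)]; ring
  rw [key]
  exact (intervalIntegral.integral_hasDerivAt_right
    (hf.intervalIntegrable _ _) (hf.stronglyMeasurableAtFilter _ _) hf.continuousAt).const_add _

lemma iicBound {f : ℝ → ℝ} {κ C : ℝ} (hκ : 0 < κ)
    (hint : ∀ c, IntegrableOn f (Iic c))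
    (hb : ∀ y, |f y| ≤ C * Real.exp (κ * y)) (t : ℝ) :
    |∫ y in Iic t, f y| ≤ C * Real.exp (κ * t) / κ := by
  calc |∫ y in Iic t, f y| ≤ ∫ y in Iic t, |f y| := by
        simpa [Real.norm_eq_abs] using
          norm_integral_le_integral_norm (μ := volume.restrict (Iic t)) f
    _ ≤ ∫ y in Iic t, C * Real.exp (κ * y) := by
        refine integral_mono (hint t).abs ((expIntIic κ hκ t).const_mul C) hb
    _ = C * (Real.exp (κ * t) / κ) := by
        rw [MeasureTheory.integral_const_mul, expIntegralIic κ hκ t]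
    _ = C * Real.exp (κ * t) / κ := by ring

/-- `K₀` is the Green's function of `κ² - d²/dξ²`: for bounded continuous `g`,
`K₀ * g ∈ C²_b(ℝ)` and `(K₀*g)'' - κ²(K₀*g) + g = 0`. -/
theorem K0_green_function (κ : ℝ) (hκ : 0 < κ)
    (g : ℝ → ℝ) (hg : Continuous g) (hgb : ∃ C, ∀ x, |g x| ≤ C) :
    C2b (conv (K0 κ) g) ∧
    ∀ ξ, deriv (deriv (conv (K0 κ) g)) ξ - κ ^ 2 * conv (K0 κ) g ξ + g ξ = 0 := by
  obtain ⟨C, hC⟩ := hgb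
  have hC0 : 0 ≤ C := le_trans (abs_nonneg _) (hC 0)
  set c0 : ℝ := (2*κ)⁻¹ with hc0
  have hc0pos : 0 < c0 := by positivity
  set fA : ℝ → ℝ := fun y => Real.exp (κ*y) * g y with hfA
  set fB : ℝ → ℝ := fun y => Real.exp (κ*y) * g (-y) with hfB
  have hfAc : Continuous fA := (Real.continuous_exp.comp (continuous_const.mul continuous_id)).mul hg
  have hfBc : Continuous fB :=
    (Real.continuous_exp.comp (continuous_const.mul continuous_id)).mul (hg.comp continuous_neg)
  have hfAb : ∀ y, |fA y| ≤ C * Real.exp (κ*y) := by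
    intro y
    rw [hfA, abs_mul, abs_of_pos (Real.exp_pos _)]
    calc Real.exp (κ*y) * |g y| ≤ Real.exp (κ*y) * C :=
          mul_le_mul_of_nonneg_left (hC y) (Real.exp_pos _).le
      _ = C * Real.exp (κ*y) := mul_comm _ _
  have hfBb : ∀ y, |fB y| ≤ C * Real.exp (κ*y) := by
    intro y
    rw [hfB, abs_mul, abs_of_pos (Real.exp_pos _)]
    calc Real.exp (κ*y) * |g (-y)| ≤ Real.exp (κ*y) * C :=
          mul_le_mul_of_nonneg_left (hC (-y)) (Real.exp_pos _).le
      _ = C * Real.exp (κ*y) := mul_comm _ _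
  have hintA : ∀ c, IntegrableOn fA (Iic c) := fun c =>
    ((expIntIic κ hκ c).const_mul C).mono' hfAc.aestronglyMeasurable
      (ae_of_all _ fun y => by simpa [Real.norm_eq_abs] using hfAb y)
  have hintB : ∀ c, IntegrableOn fB (Iic c) := fun c =>
    ((expIntIic κ hκ c).const_mul C).mono' hfBc.aestronglyMeasurable
      (ae_of_all _ fun y => by simpa [Real.norm_eq_abs] using hfBb y)
  set A : ℝ → ℝ := fun t => ∫ y in Iic t, fA y with hA
  set Bt : ℝ → ℝ := fun t => ∫ y in Iic t, fB y with hBt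
  set u : ℝ → ℝ := fun ξ => c0 * (Real.exp (-(κ*ξ)) * A ξ + Real.exp (κ*ξ) * Bt (-ξ)) with hu
  -- integrability of the kernel
  have hK0nonneg : ∀ x, 0 ≤ K0 κ x := fun x => by
    unfold K0; positivity
  have hK0cont : Continuous (K0 κ) := by
    unfold K0
    exact (Real.continuous_exp.comp (continuous_const.mul continuous_abs)).div_const _
  have iK0 : Integrable (K0 κ) := by
    rw [← integrableOn_univ, ← Iic_union_Ioi (a := (0:ℝ))]
    refine integrableOn_union.mpr ⟨?_, ?_⟩
    · have h0 : IntegrableOn (fun x : ℝ => Real.exp (κ * x) / (2*κ)) (Iic 0) :=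
        (expIntIic κ hκ 0).div_const (2*κ)
      refine h0.congr_fun ?_ measurableSet_Iic
      intro x hx
      simp only [K0, abs_of_nonpos (mem_Iic.mp hx), mul_neg, neg_neg, neg_mul]
    · have : IntegrableOn (fun x : ℝ => Real.exp (-κ * x) / (2*κ)) (Ioi 0) :=
        (exp_neg_integrableOn_Ioi 0 hκ).div_const _
      refine this.congr_fun ?_ measurableSet_Ioi
      intro x hx
      simp only [K0, abs_of_pos (mem_Ioi.mp hx)]
  have iK0shift : ∀ ξ : ℝ, Integrable (fun y => K0 κ (ξ - y)) := by
    intro ξ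
    have := iK0.comp_sub_right ξ
    refine this.congr ?_
    refine ae_of_all _ fun y => ?_
    simp only [K0, abs_sub_comm y ξ]
  have iF : ∀ ξ : ℝ, Integrable (fun y => K0 κ (ξ - y) * g y) := by
    intro ξ
    refine (((iK0shift ξ).const_mul C).mono'
      ((hK0cont.comp (continuous_const.sub continuous_id)).mul hg).aestronglyMeasurable
      (ae_of_all _ fun y => ?_))
    rw [Real.norm_eq_abs, abs_mul, abs_of_nonneg (hK0nonneg _)]
    calc K0 κ (ξ-y) * |g y| ≤ K0 κ (ξ-y) * C :=
          mul_le_mul_of_nonneg_left (hC y) (hK0nonneg _)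
      _ = C * K0 κ (ξ-y) := mul_comm _ _
  -- key formula
  have key : conv (K0 κ) g = u := by
    funext ξ
    have hsplit : conv (K0 κ) g ξ
        = (∫ y in Iic ξ, K0 κ (ξ - y) * g y) + ∫ y in Ioi ξ, K0 κ (ξ - y) * g y :=
      (intervalIntegral.integral_Iic_add_Ioi (iF ξ).integrableOn (iF ξ).integrableOn).symm
    have h1 : ∫ y in Iic ξ, K0 κ (ξ - y) * g y = c0 * Real.exp (-(κ*ξ)) * A ξ := by
      have : ∀ y ∈ Iic ξ, K0 κ (ξ - y) * g y = (c0 * Real.exp (-(κ*ξ))) * fA y := by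
        intro y hy
        have : |ξ - y| = ξ - y := abs_of_nonneg (by linarith [mem_Iic.mp hy])
        simp only [K0, this, hfA, hc0]
        rw [show -κ * (ξ - y) = -(κ*ξ) + κ*y by ring, Real.exp_add]
        field_simp
      rw [setIntegral_congr_fun measurableSet_Iic this, MeasureTheory.integral_const_mul]
    have h2 : ∫ y in Ioi ξ, K0 κ (ξ - y) * g y = c0 * Real.exp (κ*ξ) * Bt (-ξ) := by
      have e1 : ∀ y ∈ Ioi ξ, K0 κ (ξ - y) * g y
          = (c0 * Real.exp (κ*ξ)) * (Real.exp (-(κ*y)) * g y) := by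
        intro y hy
        have : |ξ - y| = y - ξ := by
          rw [abs_sub_comm]; exact abs_of_pos (by linarith [mem_Ioi.mp hy])
        simp only [K0, this, hc0]
        rw [show -κ * (y - ξ) = κ*ξ + -(κ*y) by ring, Real.exp_add]
        field_simp
      rw [setIntegral_congr_fun measurableSet_Ioi e1, MeasureTheory.integral_const_mul]
      congr 1
      have := integral_comp_neg_Iic (-ξ) (fun y => Real.exp (-(κ*y)) * g y)
      simp only [neg_neg] at this
      rw [← this, hBt]
      congr 1; funext x; simp [hfB]
    rw [hsplit, h1, h2, hu]
    ring
  set v : ℝ → ℝ := fun ξ => c0 * κ * (Real.exp (κ*ξ) * Bt (-ξ) - Real.exp (-(κ*ξ)) * A ξ) with hv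
  have hAd : ∀ t, HasDerivAt A (fA t) t := iicDeriv hfAc hintA
  have hBd : ∀ t, HasDerivAt Bt (fB t) t := iicDeriv hfBc hintB
  have hBnegd : ∀ ξ : ℝ, HasDerivAt (fun ξ => Bt (-ξ)) (-(fB (-ξ))) ξ := by
    intro ξ
    have := (hBd (-ξ)).comp ξ (hasDerivAt_neg ξ)
    simpa [mul_comm, Function.comp_def] using this
  have hE1 : ∀ ξ : ℝ, HasDerivAt (fun ξ => Real.exp (-(κ*ξ))) (-κ * Real.exp (-(κ*ξ))) ξ := by
    intro ξ
    have h0 : HasDerivAt (fun ξ : ℝ => -(κ*ξ)) (-κ) ξ := by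
      simpa [Pi.neg_def] using ((hasDerivAt_id ξ).const_mul κ).neg
    simpa [mul_comm, Function.comp_def] using (Real.hasDerivAt_exp (-(κ*ξ))).comp ξ h0
  have hE2 : ∀ ξ : ℝ, HasDerivAt (fun ξ => Real.exp (κ*ξ)) (κ * Real.exp (κ*ξ)) ξ := by
    intro ξ
    have h0 : HasDerivAt (fun ξ : ℝ => κ*ξ) κ ξ := by
      simpa using (hasDerivAt_id ξ).const_mul κ
    simpa [mul_comm, Function.comp_def] using (Real.hasDerivAt_exp (κ*ξ)).comp ξ h0
  have hud : ∀ ξ, HasDerivAt u (v ξ) ξ := by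
    intro ξ
    have h1 := ((hE1 ξ).mul (hAd ξ)).add ((hE2 ξ).mul (hBnegd ξ))
    have h2 := h1.const_mul c0
    refine h2.congr_deriv (Eq.symm ?_)
    simp only [hv, hfA, hfB, mul_neg, neg_neg]
    ring
  have hvd : ∀ ξ, HasDerivAt v (κ^2 * u ξ - g ξ) ξ := by
    intro ξ
    have h1 := (((hE2 ξ).mul (hBnegd ξ)).sub ((hE1 ξ).mul (hAd ξ))).const_mul (c0 * κ)
    refine h1.congr_deriv (Eq.symm ?_)
    have hee : Real.exp (-(κ*ξ)) * Real.exp (κ*ξ) = 1 := by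
      rw [← Real.exp_add]; simp
    simp only [hu, hfA, hfB, mul_neg, neg_neg, hc0]
    field_simp
    linear_combination (2*g ξ) * hee
  have hderivu : deriv u = v := funext fun ξ => (hud ξ).deriv
  have hderivv : ∀ ξ, deriv v ξ = κ^2 * u ξ - g ξ := fun ξ => (hvd ξ).deriv
  have hdiffu : Differentiable ℝ u := fun ξ => (hud ξ).differentiableAt
  have hdiffv : Differentiable ℝ v := fun ξ => (hvd ξ).differentiableAt
  -- bounds
  have hee : ∀ ξ : ℝ, Real.exp (-(κ*ξ)) * Real.exp (κ*ξ) = 1 := by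
    intro ξ; rw [← Real.exp_add]; simp
  have hAb : ∀ ξ : ℝ, Real.exp (-(κ*ξ)) * |A ξ| ≤ C/κ := by
    intro ξ
    calc Real.exp (-(κ*ξ)) * |A ξ| ≤ Real.exp (-(κ*ξ)) * (C * Real.exp (κ*ξ) / κ) :=
          mul_le_mul_of_nonneg_left (iicBound hκ hintA hfAb ξ) (Real.exp_pos _).le
      _ = (Real.exp (-(κ*ξ)) * Real.exp (κ*ξ)) * (C/κ) := by ring
      _ = C/κ := by rw [hee ξ, one_mul]
  have hBb : ∀ ξ : ℝ, Real.exp (κ*ξ) * |Bt (-ξ)| ≤ C/κ := by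
    intro ξ
    have h0 : |Bt (-ξ)| ≤ C * Real.exp (κ*(-ξ)) / κ := iicBound hκ hintB hfBb (-ξ)
    calc Real.exp (κ*ξ) * |Bt (-ξ)| ≤ Real.exp (κ*ξ) * (C * Real.exp (κ*(-ξ)) / κ) :=
          mul_le_mul_of_nonneg_left h0 (Real.exp_pos _).le
      _ = (Real.exp (-(κ*ξ)) * Real.exp (κ*ξ)) * (C/κ) := by rw [show κ*(-ξ) = -(κ*ξ) by ring]; ring
      _ = C/κ := by rw [hee ξ, one_mul]
  have hub : ∀ ξ, |u ξ| ≤ C/κ^2 := by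
    intro ξ
    have h1 : |u ξ| ≤ c0 * (Real.exp (-(κ*ξ)) * |A ξ| + Real.exp (κ*ξ) * |Bt (-ξ)|) := by
      rw [hu]
      calc |c0 * (Real.exp (-(κ*ξ)) * A ξ + Real.exp (κ*ξ) * Bt (-ξ))|
          = c0 * |Real.exp (-(κ*ξ)) * A ξ + Real.exp (κ*ξ) * Bt (-ξ)| := by
            rw [abs_mul, abs_of_pos hc0pos]
        _ ≤ c0 * (|Real.exp (-(κ*ξ)) * A ξ| + |Real.exp (κ*ξ) * Bt (-ξ)|) :=
            mul_le_mul_of_nonneg_left (abs_add_le _ _) hc0pos.le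
        _ = c0 * (Real.exp (-(κ*ξ)) * |A ξ| + Real.exp (κ*ξ) * |Bt (-ξ)|) := by
            rw [abs_mul, abs_mul, abs_of_pos (Real.exp_pos _), abs_of_pos (Real.exp_pos _)]
    calc |u ξ| ≤ c0 * (C/κ + C/κ) :=
          h1.trans (mul_le_mul_of_nonneg_left (add_le_add (hAb ξ) (hBb ξ)) hc0pos.le)
      _ = C/κ^2 := by rw [hc0]; field_simp; ring
  have hvb : ∀ ξ, |v ξ| ≤ C/κ := by
    intro ξ
    have h1 : |v ξ| ≤ c0 * κ * (Real.exp (κ*ξ) * |Bt (-ξ)| + Real.exp (-(κ*ξ)) * |A ξ|) := by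
      rw [hv]
      calc |c0 * κ * (Real.exp (κ*ξ) * Bt (-ξ) - Real.exp (-(κ*ξ)) * A ξ)|
          = c0 * κ * |Real.exp (κ*ξ) * Bt (-ξ) - Real.exp (-(κ*ξ)) * A ξ| := by
            rw [abs_mul, abs_of_pos (by positivity : (0:ℝ) < c0 * κ)]
        _ ≤ c0 * κ * (|Real.exp (κ*ξ) * Bt (-ξ)| + |Real.exp (-(κ*ξ)) * A ξ|) :=
            mul_le_mul_of_nonneg_left (abs_sub _ _) (by positivity)
        _ = c0 * κ * (Real.exp (κ*ξ) * |Bt (-ξ)| + Real.exp (-(κ*ξ)) * |A ξ|) := by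
            rw [abs_mul, abs_mul, abs_of_pos (Real.exp_pos _), abs_of_pos (Real.exp_pos _)]
    calc |v ξ| ≤ c0 * κ * (C/κ + C/κ) :=
          h1.trans (mul_le_mul_of_nonneg_left (add_le_add (hBb ξ) (hAb ξ)) (by positivity))
      _ = C/κ := by rw [hc0]; field_simp; ring
  have hucont : Continuous u := hdiffu.continuous
  have hcd : ContDiff ℝ 2 u := by
    rw [show (2 : WithTop ℕ∞) = 1 + 1 by norm_num, contDiff_succ_iff_deriv]
    refine ⟨hdiffu, by simp, ?_⟩
    rw [hderivu, contDiff_one_iff_deriv]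
    refine ⟨hdiffv, ?_⟩
    rw [funext hderivv]
    exact (continuous_const.mul hucont).sub hg
  rw [key]
  refine ⟨⟨hcd, ⟨C/κ^2, hub⟩, ⟨C/κ, by rw [hderivu]; exact hvb⟩, ⟨2*C, ?_⟩⟩, ?_⟩
  · intro ξ
    rw [hderivu, hderivv ξ]
    calc |κ^2 * u ξ - g ξ| ≤ |κ^2 * u ξ| + |g ξ| := abs_sub _ _
      _ ≤ κ^2 * (C/κ^2) + C := by
          refine add_le_add ?_ (hC ξ)
          rw [abs_mul, abs_of_pos (by positivity : (0:ℝ) < κ^2)]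
          exact mul_le_mul_of_nonneg_left (hub ξ) (by positivity)
      _ = 2*C := by field_simp; ring
  · intro ξ
    rw [hderivu, hderivv ξ]
    ring
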